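/- For each fixed μ ∈ ℝ, lim_{v→0} Z_v(μ) = Φ(μ), i.e., the Rayleigh-normal distribution functions converge pointwise to the standard normal CDF as v → 0. -/

import Mathlib

open MeasureTheory Set Filter Real

noncomputable def normalPDF (μ v x : ℝ) : ℝ :=
  (Real.sqrt (2 * Real.pi * v))⁻¹ * Real.exp (-(x - μ)^2 / (2 * v))

noncomputable def normalCDF (μ v x : ℝ) : ℝ :=
  ∫ t in Set.Iio x, normalPDF μ v t

lemma normalPDF_eq (m v : ℝ) (hv : 0 < v) :
    normalPDF m v = ProbabilityTheory.gaussianPDFReal m ⟨v, hv.le⟩ := rfl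

lemma normalPDF_nonneg (m v x : ℝ) : 0 ≤ normalPDF m v x := by
  unfold normalPDF; positivity

lemma normalPDF_pos (m v x : ℝ) (hv : 0 < v) : 0 < normalPDF m v x := by
  unfold normalPDF
  have : 0 < Real.sqrt (2 * Real.pi * v) := Real.sqrt_pos.2 (by positivity)
  positivity

lemma continuous_normalPDF (m v : ℝ) : Continuous (normalPDF m v) := by
  unfold normalPDF
  fun_prop

lemma integrable_normalPDF (m v : ℝ) (hv : 0 < v) : Integrable (normalPDF m v) := by
  rw [normalPDF_eq m v hv]
  exact ProbabilityTheory.integrable_gaussianPDFReal m _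

lemma integral_normalPDF (m v : ℝ) (hv : 0 < v) : ∫ x, normalPDF m v x = 1 := by
  rw [normalPDF_eq m v hv]
  exact ProbabilityTheory.integral_gaussianPDFReal_eq_one m
    (by simpa using hv.ne' : (⟨v, hv.le⟩ : NNReal) ≠ 0)

lemma normalCDF_nonneg (m v x : ℝ) : 0 ≤ normalCDF m v x :=
  setIntegral_nonneg measurableSet_Iio fun t _ => normalPDF_nonneg m v t

lemma normalCDF_eq_Iic (m v x : ℝ) : normalCDF m v x = ∫ t in Set.Iic x, normalPDF m v t :=
  (integral_Iic_eq_integral_Iio).symm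

lemma normalCDF_le_one (m v x : ℝ) (hv : 0 < v) : normalCDF m v x ≤ 1 := by
  rw [← integral_normalPDF m v hv]
  exact setIntegral_le_integral (integrable_normalPDF m v hv)
    (Filter.Eventually.of_forall fun t => normalPDF_nonneg m v t)

lemma support_normalPDF (m v : ℝ) (hv : 0 < v) : Function.support (normalPDF m v) = Set.univ := by
  ext x
  simp [Function.mem_support, (normalPDF_pos m v x hv).ne']

lemma setIntegral_normalPDF_pos (m v : ℝ) (hv : 0 < v) {s : Set ℝ} (hs : MeasurableSet s)
    (hμs : 0 < volume s) : 0 < ∫ t in s, normalPDF m v t := by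
  rw [setIntegral_pos_iff_support_of_nonneg_ae
    (Filter.Eventually.of_forall fun t => normalPDF_nonneg m v t)
    ((integrable_normalPDF m v hv).integrableOn)]
  rwa [support_normalPDF m v hv, Set.univ_inter]

lemma normalCDF_pos (m v x : ℝ) (hv : 0 < v) : 0 < normalCDF m v x := by
  refine setIntegral_normalPDF_pos m v hv measurableSet_Iio ?_
  simp [Real.volume_Iio]

lemma normalCDF_lt_one (m v x : ℝ) (hv : 0 < v) : normalCDF m v x < 1 := by
  have h := integral_add_compl (measurableSet_Iio (a := x)) (integrable_normalPDF m v hv)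
  rw [Set.compl_Iio] at h
  have h2 : 0 < ∫ t in Set.Ici x, normalPDF m v t := by
    refine setIntegral_normalPDF_pos m v hv measurableSet_Ici ?_
    simp [Real.volume_Ici]
  have := integral_normalPDF m v hv
  unfold normalCDF
  rw [this] at h
  linarith

lemma hasDerivAt_normalCDF (m v : ℝ) (hv : 0 < v) (x : ℝ) :
    HasDerivAt (normalCDF m v) (normalPDF m v x) x := by
  have hint := integrable_normalPDF m v hv
  have hcont := continuous_normalPDF m v
  have key : normalCDF m v = fun u =>
      (∫ t in Set.Iic (0:ℝ), normalPDF m v t) + ∫ t in (0:ℝ)..u, normalPDF m v t := by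
    funext u
    rw [normalCDF_eq_Iic, ← intervalIntegral.integral_Iic_sub_Iic hint.integrableOn hint.integrableOn]
    ring
  rw [key]
  exact (intervalIntegral.integral_hasDerivAt_right (hcont.intervalIntegrable _ _)
    (hcont.stronglyMeasurableAtFilter _ _) hcont.continuousAt).const_add _

lemma contDiff_normalCDF (m v : ℝ) (hv : 0 < v) : ContDiff ℝ 1 (normalCDF m v) := by
  rw [contDiff_one_iff_deriv]
  have hd : deriv (normalCDF m v) = normalPDF m v :=
    funext fun x => (hasDerivAt_normalCDF m v hv x).deriv
  exact ⟨fun x => (hasDerivAt_normalCDF m v hv x).differentiableAt,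
    hd ▸ continuous_normalPDF m v⟩

lemma monotone_normalCDF (m v : ℝ) (hv : 0 < v) : Monotone (normalCDF m v) :=
  monotone_of_deriv_nonneg (fun x => (hasDerivAt_normalCDF m v hv x).differentiableAt)
    (fun x => by rw [(hasDerivAt_normalCDF m v hv x).deriv]; exact normalPDF_nonneg m v x)

lemma continuous_normalCDF (m v : ℝ) (hv : 0 < v) : Continuous (normalCDF m v) :=
  (contDiff_normalCDF m v hv).continuous

lemma integrable_aux (m v : ℝ) (hv : 0 < v) :
    Integrable (fun x => (Real.sqrt (2 * Real.pi * v))⁻¹ * Real.exp (-(x - m)^2 / (4 * v))) := by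
  have h1 : Integrable (fun x : ℝ => Real.exp (-((4*v)⁻¹) * x^2)) :=
    integrable_exp_neg_mul_sq (by positivity)
  have h2 := (h1.comp_sub_right m).const_mul (Real.sqrt (2 * Real.pi * v))⁻¹
  have h3 : (fun x => (Real.sqrt (2 * Real.pi * v))⁻¹ * Real.exp (-(x - m)^2 / (4 * v)))
      = fun x => (Real.sqrt (2 * Real.pi * v))⁻¹ * Real.exp (-((4*v)⁻¹) * (x - m)^2) := by
    funext x
    congr 1
    congr 1
    ring
  rw [h3]
  exact h2

lemma integral_aux (m v : ℝ) (hv : 0 < v) :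
    ∫ x, (Real.sqrt (2 * Real.pi * v))⁻¹ * Real.exp (-(x - m)^2 / (4 * v))
      = Real.sqrt 2 := by
  rw [integral_const_mul]
  rw [integral_sub_right_eq_self (μ := volume) (fun y => Real.exp (-y^2 / (4 * v))) m]
  have : ∀ x : ℝ, -x^2 / (4*v) = -((4*v)⁻¹ * x^2) := fun x => by ring
  simp_rw [this]
  simp_rw [← neg_mul]
  rw [integral_gaussian]
  rw [show Real.pi / (4*v)⁻¹ = 2 * (2 * Real.pi * v) by field_simp; ring]
  rw [Real.sqrt_mul (by norm_num : (0:ℝ) ≤ 2)]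
  have hne : Real.sqrt (2 * Real.pi * v) ≠ 0 := by
    positivity
  field_simp

lemma normalPDF_le (m v δ x : ℝ) (hv : 0 < v) (hδ : δ^2 ≤ (x - m)^2) :
    normalPDF m v x ≤ Real.exp (-δ^2/(4*v)) *
      ((Real.sqrt (2 * Real.pi * v))⁻¹ * Real.exp (-(x - m)^2 / (4 * v))) := by
  have hc : (0:ℝ) ≤ (Real.sqrt (2 * Real.pi * v))⁻¹ := by positivity
  have h1 : normalPDF m v x
      = (Real.sqrt (2 * Real.pi * v))⁻¹ * Real.exp (-(x - m)^2 / (2 * v)) := rfl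
  have h2 : -(x - m)^2 / (2*v) ≤ -δ^2/(4*v) + -(x - m)^2 / (4*v) := by
    have h3 : -(x - m)^2 / (2*v) = -(x-m)^2/(4*v) + -(x - m)^2 / (4*v) := by ring
    have h4 : -(x-m)^2/(4*v) ≤ -δ^2/(4*v) := by
      apply div_le_div_of_nonneg_right ?_ (by positivity) |>.trans_eq rfl
      linarith
    linarith
  calc normalPDF m v x
      ≤ (Real.sqrt (2 * Real.pi * v))⁻¹ * Real.exp (-δ^2/(4*v) + -(x - m)^2 / (4*v)) := by
        rw [h1]; exact mul_le_mul_of_nonneg_left (Real.exp_le_exp.2 h2) hc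
    _ = _ := by rw [Real.exp_add]; ring

lemma tail_le (m v δ : ℝ) (hv : 0 < v) (hδ : 0 ≤ δ) {s : Set ℝ} (hs : MeasurableSet s)
    (hsub : ∀ x ∈ s, δ^2 ≤ (x - m)^2) :
    ∫ t in s, normalPDF m v t ≤ Real.sqrt 2 * Real.exp (-δ^2/(4*v)) := by
  set g := fun x => Real.exp (-δ^2/(4*v)) *
      ((Real.sqrt (2 * Real.pi * v))⁻¹ * Real.exp (-(x - m)^2 / (4 * v))) with hg
  have hgint : Integrable g := (integrable_aux m v hv).const_mul _
  have h1 : ∫ t in s, normalPDF m v t ≤ ∫ t in s, g t := by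
    refine setIntegral_mono_on (integrable_normalPDF m v hv).integrableOn
      hgint.integrableOn hs fun x hx => ?_
    exact normalPDF_le m v δ x hv (hsub x hx)
  have h2 : ∫ t in s, g t ≤ ∫ t, g t := by
    refine setIntegral_le_integral hgint (Filter.Eventually.of_forall fun t => ?_)
    have : (0:ℝ) ≤ (Real.sqrt (2 * Real.pi * v))⁻¹ := by positivity
    positivity
  have h3 : ∫ t, g t = Real.sqrt 2 * Real.exp (-δ^2/(4*v)) := by
    rw [hg]
    rw [integral_const_mul, integral_aux m v hv]
    ring
  linarith

lemma tail_Iio (m v δ : ℝ) (hv : 0 < v) (hδ : 0 ≤ δ) :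
    normalCDF m v (m - δ) ≤ Real.sqrt 2 * Real.exp (-δ^2/(4*v)) := by
  refine tail_le m v δ hv hδ measurableSet_Iio fun x hx => ?_
  have hx' : x < m - δ := hx
  nlinarith

lemma tail_Ioi (m v δ : ℝ) (hv : 0 < v) (hδ : 0 ≤ δ) :
    ∫ t in Set.Ioi (m + δ), normalPDF m v t ≤ Real.sqrt 2 * Real.exp (-δ^2/(4*v)) := by
  refine tail_le m v δ hv hδ measurableSet_Ioi fun x hx => ?_
  have hx' : m + δ < x := hx
  nlinarith

lemma Iic_ge (m v δ : ℝ) (hv : 0 < v) (hδ : 0 ≤ δ) :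
    1 - Real.sqrt 2 * Real.exp (-δ^2/(4*v)) ≤ ∫ t in Set.Iic (m + δ), normalPDF m v t := by
  have h := integral_add_compl (measurableSet_Iic (a := m + δ)) (integrable_normalPDF m v hv)
  rw [Set.compl_Iic] at h
  rw [integral_normalPDF m v hv] at h
  have := tail_Ioi m v δ hv hδ
  linarith

/-- The set of fidelities appearing in the definition of the Rayleigh-normal
distribution function: `A` runs over continuously differentiable monotone increasing
functions with `Φ ≤ A ≤ 1`. -/
noncomputable def RNFidelities (μ v : ℝ) : Set ℝ :=
  {r | ∃ A : ℝ → ℝ, ContDiff ℝ 1 A ∧ Monotone A ∧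
    (∀ x, normalCDF 0 1 x ≤ A x) ∧ (∀ x, A x ≤ 1) ∧
    r = ∫ x : ℝ, Real.sqrt (deriv A x * normalPDF μ v x)}

/-- The Rayleigh-normal distribution function `Z_v(μ)`. -/
noncomputable def RayleighNormal (v μ : ℝ) : ℝ :=
  1 - (sSup (RNFidelities μ v))^2

lemma sqrt_mul_le (a b t : ℝ) (ha : 0 ≤ a) (hb : 0 ≤ b) (ht : 0 < t) :
    Real.sqrt (a * b) ≤ (t * a + b / t) / 2 := by
  have h1 : Real.sqrt (a * b) = Real.sqrt (t * a) * Real.sqrt (b / t) := by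
    rw [← Real.sqrt_mul (by positivity)]
    congr 1
    field_simp
  have h2 : Real.sqrt (t * a) ^ 2 = t * a := Real.sq_sqrt (by positivity)
  have h3 : Real.sqrt (b / t) ^ 2 = b / t := Real.sq_sqrt (by positivity)
  nlinarith [sq_nonneg (Real.sqrt (t * a) - Real.sqrt (b / t))]

lemma deriv_nonneg_of_monotone {A : ℝ → ℝ} (hm : Monotone A)
    (hd : Differentiable ℝ A) (x : ℝ) : 0 ≤ deriv A x := by
  have h := (hd x).hasDerivAt
  rw [hasDerivAt_iff_tendsto_slope] at h
  refine ge_of_tendsto h ?_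
  filter_upwards [self_mem_nhdsWithin] with y hy
  have hyx : y ≠ x := hy
  rw [slope_def_field]
  rcases lt_or_gt_of_ne hyx with h1 | h1
  · rw [div_nonneg_iff]
    right
    constructor
    · simp only [sub_nonpos]; exact hm h1.le
    · linarith
  · apply div_nonneg
    · simp only [sub_nonneg]
      exact hm h1.le
    · linarith

lemma RNFidelities_le (μ v c : ℝ) (hv : 0 < v) {r : ℝ} (hr : r ∈ RNFidelities μ v) :
    r ≤ Real.sqrt (normalCDF μ v c) + Real.sqrt (1 - normalCDF 0 1 c) := by
  obtain ⟨A, hA, hmono, hlow, hup, hre⟩ := hr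
  set N := normalPDF μ v with hN
  set β := normalCDF μ v c with hβdef
  set α := 1 - normalCDF 0 1 c with hαdef
  have hβ : 0 < β := normalCDF_pos μ v c hv
  have hα : 0 < α := by
    have := normalCDF_lt_one 0 1 c one_pos
    rw [hαdef]; linarith
  have hNint : Integrable N := integrable_normalPDF μ v hv
  have hNnn : ∀ x, 0 ≤ N x := fun x => normalPDF_nonneg μ v x
  have hdiff : Differentiable ℝ A := hA.differentiable one_ne_zero
  have hdC : Continuous (deriv A) := hA.continuous_deriv le_rfl
  have hd0 : ∀ x, 0 ≤ deriv A x := deriv_nonneg_of_monotone hmono hdiff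
  have hA0 : ∀ x, 0 ≤ A x := fun x => (normalCDF_nonneg 0 1 x).trans (hlow x)
  have hbddA : BddAbove (Set.range A) := ⟨1, by rintro _ ⟨x, rfl⟩; exact hup x⟩
  have hbddB : BddBelow (Set.range A) := ⟨0, by rintro _ ⟨x, rfl⟩; exact hA0 x⟩
  have hLtend : Filter.Tendsto A Filter.atTop (nhds (⨆ x, A x)) :=
    tendsto_atTop_ciSup hmono hbddA
  have hmtend : Filter.Tendsto A Filter.atBot (nhds (⨅ x, A x)) :=
    tendsto_atBot_ciInf hmono hbddB
  have hL1 : (⨆ x, A x) ≤ 1 := ciSup_le hup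
  have hm0 : 0 ≤ ⨅ x, A x := le_ciInf hA0
  have hI_Iic : IntegrableOn (deriv A) (Set.Iic c) := by
    refine integrableOn_Iic_of_intervalIntegral_norm_bounded 1 c
      (fun i : ℕ => hdC.integrableOn_Ioc)
      (tendsto_neg_atTop_atBot.comp tendsto_natCast_atTop_atTop) ?_
    filter_upwards [tendsto_natCast_atTop_atTop.eventually_ge_atTop (-c)] with i hi
    simp only [Function.comp_apply]
    have h1 : -(i:ℝ) ≤ c := by linarith
    have h2 : ∫ x in (-(i:ℝ))..c, ‖deriv A x‖ = ∫ x in (-(i:ℝ))..c, deriv A x :=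
      intervalIntegral.integral_congr fun x _ => Real.norm_of_nonneg (hd0 x)
    rw [h2, intervalIntegral.integral_deriv_eq_sub (fun x _ => hdiff x)
      (hdC.intervalIntegrable _ _)]
    linarith [hup c, hA0 (-(i:ℝ))]
  have hI_Ioi : IntegrableOn (deriv A) (Set.Ioi c) :=
    integrableOn_Ioi_deriv_of_nonneg' (fun x _ => (hdiff x).hasDerivAt)
      (fun x _ => hd0 x) hLtend
  have hIic_val : ∫ x in Set.Iic c, deriv A x = A c - ⨅ x, A x :=
    integral_Iic_of_hasDerivAt_of_tendsto' (fun x _ => (hdiff x).hasDerivAt) hI_Iic hmtend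
  have hIoi_val : ∫ x in Set.Ioi c, deriv A x = (⨆ x, A x) - A c :=
    integral_Ioi_of_hasDerivAt_of_tendsto' (fun x _ => (hdiff x).hasDerivAt) hI_Ioi hLtend
  have hIic_le : ∫ x in Set.Iic c, deriv A x ≤ 1 := by
    rw [hIic_val]; linarith [hup c]
  have hIoi_le : ∫ x in Set.Ioi c, deriv A x ≤ α := by
    rw [hIoi_val, hαdef]; linarith [hlow c]
  have hAint : Integrable (deriv A) := by
    have := hI_Iic.union hI_Ioi
    rwa [Set.Iic_union_Ioi, integrableOn_univ] at this
  set f := fun x => Real.sqrt (deriv A x * N x) with hf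
  have hfc : Continuous f := Real.continuous_sqrt.comp (hdC.mul (continuous_normalPDF μ v))
  have hfnn : ∀ x, 0 ≤ f x := fun x => Real.sqrt_nonneg _
  have hfint : Integrable f := by
    refine Integrable.mono' ((hAint.add hNint).div_const 2) hfc.aestronglyMeasurable
      (Filter.Eventually.of_forall fun x => ?_)
    rw [Real.norm_of_nonneg (hfnn x)]
    have := sqrt_mul_le (deriv A x) (N x) 1 (hd0 x) (hNnn x) one_pos
    simp only [one_mul, div_one] at this
    exact this
  have hNIoi_le : ∫ x in Set.Ioi c, N x ≤ 1 := by
    rw [← integral_normalPDF μ v hv]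
    exact setIntegral_le_integral hNint (Filter.Eventually.of_forall hNnn)
  have hsβ : 0 < Real.sqrt β := Real.sqrt_pos.2 hβ
  have hsα : 0 < Real.sqrt α := Real.sqrt_pos.2 hα
  have key1 : ∫ x in Set.Iic c, f x ≤ Real.sqrt β := by
    have step1 : ∫ x in Set.Iic c, f x
        ≤ ∫ x in Set.Iic c, (Real.sqrt β * deriv A x + N x / Real.sqrt β) / 2 := by
      refine setIntegral_mono_on hfint.integrableOn
        (((hI_Iic.const_mul _).add (hNint.integrableOn.div_const _)).div_const 2)
        measurableSet_Iic fun x _ => ?_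
      exact sqrt_mul_le _ _ _ (hd0 x) (hNnn x) hsβ
    have step2 : ∫ x in Set.Iic c, (Real.sqrt β * deriv A x + N x / Real.sqrt β) / 2
        = (Real.sqrt β * (∫ x in Set.Iic c, deriv A x)
            + (∫ x in Set.Iic c, N x) / Real.sqrt β) / 2 := by
      rw [integral_div, integral_add (hI_Iic.const_mul _) (hNint.integrableOn.div_const _),
        integral_const_mul, integral_div]
    have hNIic : ∫ x in Set.Iic c, N x = β := (normalCDF_eq_Iic μ v c).symm
    rw [step2, hNIic] at step1
    have : (Real.sqrt β * (∫ x in Set.Iic c, deriv A x) + β / Real.sqrt β) / 2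
        ≤ (Real.sqrt β * 1 + Real.sqrt β) / 2 := by
      rw [Real.div_sqrt]
      have h := mul_le_mul_of_nonneg_left hIic_le hsβ.le
      linarith
    calc ∫ x in Set.Iic c, f x ≤ _ := step1
      _ ≤ (Real.sqrt β * 1 + Real.sqrt β) / 2 := this
      _ = Real.sqrt β := by ring
  have key2 : ∫ x in Set.Ioi c, f x ≤ Real.sqrt α := by
    have step1 : ∫ x in Set.Ioi c, f x
        ≤ ∫ x in Set.Ioi c, ((Real.sqrt α)⁻¹ * deriv A x + N x * Real.sqrt α) / 2 := by
      refine setIntegral_mono_on hfint.integrableOn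
        (((hI_Ioi.const_mul _).add (hNint.integrableOn.mul_const _)).div_const 2)
        measurableSet_Ioi fun x _ => ?_
      have := sqrt_mul_le (deriv A x) (N x) (Real.sqrt α)⁻¹ (hd0 x) (hNnn x)
        (by positivity)
      have h2 : N x / (Real.sqrt α)⁻¹ = N x * Real.sqrt α := by field_simp
      rwa [h2] at this
    have step2 : ∫ x in Set.Ioi c, ((Real.sqrt α)⁻¹ * deriv A x + N x * Real.sqrt α) / 2
        = ((Real.sqrt α)⁻¹ * (∫ x in Set.Ioi c, deriv A x)
            + (∫ x in Set.Ioi c, N x) * Real.sqrt α) / 2 := by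
      rw [integral_div, integral_add (hI_Ioi.const_mul _) (hNint.integrableOn.mul_const _),
        integral_const_mul, integral_mul_const]
    rw [step2] at step1
    have : ((Real.sqrt α)⁻¹ * (∫ x in Set.Ioi c, deriv A x)
            + (∫ x in Set.Ioi c, N x) * Real.sqrt α) / 2
        ≤ ((Real.sqrt α)⁻¹ * α + 1 * Real.sqrt α) / 2 := by
      have ha' := mul_le_mul_of_nonneg_left hIoi_le (inv_nonneg.2 hsα.le)
      have hb' := mul_le_mul_of_nonneg_right hNIoi_le hsα.le
      linarith
    have hval : ((Real.sqrt α)⁻¹ * α + 1 * Real.sqrt α) / 2 = Real.sqrt α := by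
      rw [inv_mul_eq_div, Real.div_sqrt]
      ring
    linarith
  have hsplit : (∫ x in Set.Iic c, f x) + ∫ x in Set.Ioi c, f x = ∫ x, f x := by
    have := integral_add_compl (measurableSet_Iic (a := c)) hfint
    rwa [Set.compl_Iic] at this
  rw [hre]
  calc ∫ x, Real.sqrt (deriv A x * normalPDF μ v x) = ∫ x, f x := rfl
    _ = (∫ x in Set.Iic c, f x) + ∫ x in Set.Ioi c, f x := hsplit.symm
    _ ≤ Real.sqrt β + Real.sqrt α := add_le_add key1 key2

lemma RNFidelities_lower (μ v c : ℝ) (hv : 0 < v) :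
    ∃ r ∈ RNFidelities μ v,
      Real.sqrt (1 - normalCDF 0 1 c) * ∫ x in Set.Iic c, normalPDF μ v x ≤ r := by
  set Φ := normalCDF 0 1 with hΦdef
  set φ := normalPDF 0 1 with hφdef
  set F := normalCDF μ v with hFdef
  set N := normalPDF μ v with hNdef
  have hΦ0 : ∀ x, 0 ≤ Φ x := fun x => normalCDF_nonneg 0 1 x
  have hΦ1 : ∀ x, Φ x ≤ 1 := fun x => normalCDF_le_one 0 1 x one_pos
  have hF0 : ∀ x, 0 ≤ F x := fun x => normalCDF_nonneg μ v x
  have hF1 : ∀ x, F x ≤ 1 := fun x => normalCDF_le_one μ v x hv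
  have hφnn : ∀ x, 0 ≤ φ x := fun x => normalPDF_nonneg 0 1 x
  have hNnn : ∀ x, 0 ≤ N x := fun x => normalPDF_nonneg μ v x
  have hφint : Integrable φ := integrable_normalPDF 0 1 one_pos
  have hNint : Integrable N := integrable_normalPDF μ v hv
  set A := fun x => Φ x + F x - Φ x * F x with hAdef
  have hdA : ∀ x, HasDerivAt A (φ x * (1 - F x) + N x * (1 - Φ x)) x := by
    intro x
    have h1 := hasDerivAt_normalCDF 0 1 one_pos x
    have h2 := hasDerivAt_normalCDF μ v hv x
    have h3 := (h1.add h2).sub (h1.mul h2)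
    refine h3.congr_deriv ?_
    ring
  have hderiv : ∀ x, deriv A x = φ x * (1 - F x) + N x * (1 - Φ x) :=
    fun x => (hdA x).deriv
  have hd0 : ∀ x, 0 ≤ deriv A x := by
    intro x
    rw [hderiv x]
    have := hφnn x; have := hNnn x; have := hF1 x; have := hΦ1 x
    nlinarith
  have hcd : ContDiff ℝ 1 A :=
    ((contDiff_normalCDF 0 1 one_pos).add (contDiff_normalCDF μ v hv)).sub
      ((contDiff_normalCDF 0 1 one_pos).mul (contDiff_normalCDF μ v hv))
  have hmono : Monotone A :=
    monotone_of_deriv_nonneg (fun x => (hdA x).differentiableAt) hd0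
  have hlow : ∀ x, normalCDF 0 1 x ≤ A x := by
    intro x
    have := hF0 x; have := hΦ1 x
    simp only [hAdef]
    nlinarith
  have hup : ∀ x, A x ≤ 1 := by
    intro x
    have := hF1 x; have := hΦ1 x; have := hF0 x; have := hΦ0 x
    simp only [hAdef]
    nlinarith
  refine ⟨∫ x : ℝ, Real.sqrt (deriv A x * normalPDF μ v x),
    ⟨A, hcd, hmono, hlow, hup, rfl⟩, ?_⟩
  have hdCont : Continuous (deriv A) := hcd.continuous_deriv le_rfl
  have hrint : Integrable (fun x => Real.sqrt (deriv A x * N x)) := by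
    refine Integrable.mono' (((hφint.add hNint).add hNint).div_const 2)
      (Real.continuous_sqrt.comp (hdCont.mul (continuous_normalPDF μ v))).aestronglyMeasurable
      (Filter.Eventually.of_forall fun x => ?_)
    rw [Real.norm_of_nonneg (Real.sqrt_nonneg _)]
    have h1 := sqrt_mul_le (deriv A x) (N x) 1 (hd0 x) (hNnn x) one_pos
    simp only [one_mul, div_one] at h1
    have h2 : deriv A x ≤ φ x + N x := by
      rw [hderiv x]
      have := hφnn x; have := hNnn x; have := hF0 x; have := hΦ0 x
      nlinarith
    calc Real.sqrt (deriv A x * N x) ≤ (deriv A x + N x) / 2 := h1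
      _ ≤ (φ x + N x + N x) / 2 := by linarith
  have h1c : 0 ≤ 1 - Φ c := by linarith [hΦ1 c]
  have hpt : ∀ x ∈ Set.Iic c, Real.sqrt (1 - Φ c) * N x ≤ Real.sqrt (deriv A x * N x) := by
    intro x hx
    have hΦm : Φ x ≤ Φ c := monotone_normalCDF 0 1 one_pos hx
    have hineq : (1 - Φ c) * (N x * N x) ≤ deriv A x * N x := by
      rw [hderiv x]
      have e1 : 0 ≤ φ x * (1 - F x) * N x :=
        mul_nonneg (mul_nonneg (hφnn x) (by linarith [hF1 x])) (hNnn x)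
      have e2 : 0 ≤ N x * N x * (Φ c - Φ x) :=
        mul_nonneg (mul_nonneg (hNnn x) (hNnn x)) (by linarith)
      nlinarith
    have := Real.sqrt_le_sqrt hineq
    rwa [Real.sqrt_mul h1c, Real.sqrt_mul_self (hNnn x)] at this
  calc Real.sqrt (1 - normalCDF 0 1 c) * ∫ x in Set.Iic c, normalPDF μ v x
      = ∫ x in Set.Iic c, Real.sqrt (1 - Φ c) * N x := (integral_const_mul _ _).symm
    _ ≤ ∫ x in Set.Iic c, Real.sqrt (deriv A x * N x) :=
        setIntegral_mono_on (hNint.integrableOn.const_mul _) hrint.integrableOn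
          measurableSet_Iic hpt
    _ ≤ ∫ x : ℝ, Real.sqrt (deriv A x * N x) :=
        setIntegral_le_integral hrint
          (Filter.Eventually.of_forall fun x => Real.sqrt_nonneg _)
    _ = ∫ x : ℝ, Real.sqrt (deriv A x * normalPDF μ v x) := rfl

lemma tendsto_exp_term (δ : ℝ) (hδ : 0 < δ) :
    Filter.Tendsto (fun v => Real.sqrt 2 * Real.exp (-δ^2/(4*v)))
      (nhdsWithin 0 (Set.Ioi 0)) (nhds 0) := by
  have h2 : Filter.Tendsto (fun v : ℝ => v⁻¹) (nhdsWithin 0 (Set.Ioi 0)) Filter.atTop :=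
    tendsto_inv_nhdsGT_zero
  have h3 : Filter.Tendsto (fun v : ℝ => (δ^2/4) * v⁻¹) (nhdsWithin 0 (Set.Ioi 0))
      Filter.atTop := h2.const_mul_atTop (by positivity)
  have h4 := tendsto_neg_atTop_atBot.comp h3
  have h1 : Filter.Tendsto (fun v : ℝ => -δ^2/(4*v)) (nhdsWithin 0 (Set.Ioi 0))
      Filter.atBot := by
    refine Filter.Tendsto.congr' ?_ h4
    filter_upwards [self_mem_nhdsWithin] with v hv
    have hv0 : v ≠ 0 := ne_of_gt hv
    simp only [Function.comp_apply]
    field_simp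
  have h5 := Real.tendsto_exp_atBot.comp h1
  have h6 := h5.const_mul (Real.sqrt 2)
  simpa using h6

lemma tendsto_sSup_RNFidelities (μ : ℝ) :
    Filter.Tendsto (fun v => sSup (RNFidelities μ v)) (nhdsWithin 0 (Set.Ioi 0))
      (nhds (Real.sqrt (1 - normalCDF 0 1 μ))) := by
  rw [Metric.tendsto_nhds]
  intro ε hε
  set s := Real.sqrt (1 - normalCDF 0 1 μ) with hsdef
  have hs0 : 0 ≤ s := Real.sqrt_nonneg _
  have hs1 : s ≤ 1 := by
    rw [hsdef]
    refine Real.sqrt_le_one.2 ?_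
    linarith [normalCDF_nonneg 0 1 μ]
  have hcont : ContinuousAt (fun t => Real.sqrt (1 - normalCDF 0 1 t)) μ :=
    (Real.continuous_sqrt.comp
      (continuous_const.sub (continuous_normalCDF 0 1 one_pos))).continuousAt
  obtain ⟨δ, hδpos, hδ⟩ := Metric.continuousAt_iff.1 hcont (ε/4) (by positivity)
  have hdist1 : dist (μ - δ/2) μ < δ := by
    rw [Real.dist_eq, show μ - δ/2 - μ = -(δ/2) by ring, abs_neg,
      abs_of_nonneg (by positivity)]
    linarith
  have hdist2 : dist (μ + δ/2) μ < δ := by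
    rw [Real.dist_eq, show μ + δ/2 - μ = δ/2 by ring, abs_of_nonneg (by positivity)]
    linarith
  have hc1 : Real.sqrt (1 - normalCDF 0 1 (μ - δ/2)) < s + ε/4 := by
    have := hδ hdist1
    rw [Real.dist_eq, abs_lt] at this
    linarith [this.2]
  have hc2 : s - ε/4 < Real.sqrt (1 - normalCDF 0 1 (μ + δ/2)) := by
    have := hδ hdist2
    rw [Real.dist_eq, abs_lt] at this
    linarith [this.1]
  filter_upwards [self_mem_nhdsWithin,
    (tendsto_exp_term (δ/2) (by positivity)).eventually
      (gt_mem_nhds (lt_min (by positivity : (0:ℝ) < (ε/4)^2) (by positivity : (0:ℝ) < ε/4)))]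
    with v hv htail
  have hv' : 0 < v := hv
  set τ := Real.sqrt 2 * Real.exp (-(δ/2)^2/(4*v)) with hτdef
  have hτ0 : 0 ≤ τ := by positivity
  have hτ1 : τ < (ε/4)^2 := htail.trans_le (min_le_left _ _)
  have hτ2 : τ < ε/4 := htail.trans_le (min_le_right _ _)
  have hbdd : BddAbove (RNFidelities μ v) :=
    ⟨_, fun r hr => RNFidelities_le μ v (μ - δ/2) hv' hr⟩
  obtain ⟨r₀, hr₀mem, hr₀⟩ := RNFidelities_lower μ v (μ + δ/2) hv'
  have hne : (RNFidelities μ v).Nonempty := ⟨r₀, hr₀mem⟩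
  -- upper bound
  have hsup_le : sSup (RNFidelities μ v)
      ≤ Real.sqrt (normalCDF μ v (μ - δ/2)) + Real.sqrt (1 - normalCDF 0 1 (μ - δ/2)) :=
    csSup_le hne fun r hr => RNFidelities_le μ v (μ - δ/2) hv' hr
  have htail1 : normalCDF μ v (μ - δ/2) ≤ τ := tail_Iio μ v (δ/2) hv' (by positivity)
  have hsqrt_tail : Real.sqrt (normalCDF μ v (μ - δ/2)) < ε/4 :=
    (Real.sqrt_lt' (by positivity)).2 (lt_of_le_of_lt htail1 hτ1)
  have hupper : sSup (RNFidelities μ v) < s + ε/2 := by linarith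
  -- lower bound
  have hle_sup : r₀ ≤ sSup (RNFidelities μ v) := le_csSup hbdd hr₀mem
  set q := Real.sqrt (1 - normalCDF 0 1 (μ + δ/2)) with hqdef
  set I := ∫ x in Set.Iic (μ + δ/2), normalPDF μ v x with hIdef
  have hq0 : 0 ≤ q := Real.sqrt_nonneg _
  have hq1 : q ≤ 1 := by
    rw [hqdef]
    exact Real.sqrt_le_one.2 (by linarith [normalCDF_nonneg 0 1 (μ + δ/2)])
  have hI_ge : 1 - τ ≤ I := Iic_ge μ v (δ/2) hv' (by positivity)
  have hqI : q * (1 - τ) ≤ q * I := mul_le_mul_of_nonneg_left hI_ge hq0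
  have hqτ : q * τ ≤ τ := mul_le_of_le_one_left hτ0 hq1
  have hlower : s - ε < sSup (RNFidelities μ v) := by
    have : q * (1 - τ) = q - q * τ := by ring
    nlinarith
  rw [Real.dist_eq, abs_lt]
  constructor <;> linarith

theorem stmt14 (μ : ℝ) :
    Filter.Tendsto (fun v => RayleighNormal v μ) (nhdsWithin 0 (Set.Ioi 0))
      (nhds (normalCDF 0 1 μ)) := by
  have hsup := tendsto_sSup_RNFidelities μ
  have h2 : Filter.Tendsto (fun v => 1 - (sSup (RNFidelities μ v))^2)
      (nhdsWithin 0 (Set.Ioi 0))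
      (nhds (1 - (Real.sqrt (1 - normalCDF 0 1 μ))^2)) :=
    tendsto_const_nhds.sub (hsup.pow 2)
  have hs2 : (Real.sqrt (1 - normalCDF 0 1 μ))^2 = 1 - normalCDF 0 1 μ :=
    Real.sq_sqrt (by linarith [normalCDF_le_one 0 1 μ one_pos])
  have h3 : (1 : ℝ) - (Real.sqrt (1 - normalCDF 0 1 μ))^2 = normalCDF 0 1 μ := by
    rw [hs2]; ring
  rw [h3] at h2
  exact h2
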